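/- For every positive integer k and every positive integer n, φ_k(n) = φ(n)^k · ∏_{p | n} (1 − 1/(p−1) + 1/(p−1)² + ⋯ + (−1)^{k−1}/(p−1)^{k−1}), where the product runs over prime divisors p of n. -/

import Mathlib

open Finset

/-- The `k`-dimensional generalized Euler function `φ_k(n)`. -/
def tothPhi (k n : ℕ) : ℕ :=
  ((Fintype.piFinset fun _ : Fin k => Finset.Icc 1 n).filter
    (fun a => Nat.gcd (∏ i, a i) n = 1 ∧ Nat.gcd (∑ i, a i) n = 1)).card

open scoped Classical in
noncomputable def tpM (k n : ℕ) [NeZero n] : ℕ :=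
  (Finset.univ.filter fun a : Fin k → ZMod n => (∀ i, IsUnit (a i)) ∧ IsUnit (∑ i, a i)).card

theorem icc_repr {n x : ℕ} (hx : x ∈ Finset.Icc 1 n) :
    (if x % n = 0 then n else x % n) = x := by
  simp only [Finset.mem_Icc] at hx
  rcases eq_or_lt_of_le hx.2 with h | h
  · subst h; simp
  · rw [Nat.mod_eq_of_lt h, if_neg (by omega)]

theorem icc_cast_inj {n x y : ℕ} (hx : x ∈ Finset.Icc 1 n) (hy : y ∈ Finset.Icc 1 n)
    (h : (x : ZMod n) = y) : x = y := by
  have h2 : x % n = y % n := (ZMod.natCast_eq_natCast_iff x y n).mp h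
  rw [← icc_repr hx, ← icc_repr hy, h2]

theorem icc_cast_surj {n : ℕ} (hn : 0 < n) (z : ZMod n) :
    ∃ x ∈ Finset.Icc 1 n, (x : ZMod n) = z := by
  haveI : NeZero n := ⟨hn.ne'⟩
  refine ⟨if z.val = 0 then n else z.val, ?_, ?_⟩
  · simp only [Finset.mem_Icc]
    split_ifs with h
    · omega
    · have := ZMod.val_lt z; omega
  · split_ifs with h
    · rw [ZMod.natCast_self]
      exact ((ZMod.val_eq_zero z).mp h).symm
    · simp [ZMod.natCast_val, ZMod.cast_id]

theorem tothPhi_eq_tpM (k n : ℕ) [NeZero n] : tothPhi k n = tpM k n := by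
  have hn : 0 < n := Nat.pos_of_ne_zero (NeZero.ne n)
  classical
  unfold tothPhi tpM
  apply Finset.card_bij (fun a _ => fun i => ((a i : ℕ) : ZMod n))
  · intro a ha
    simp only [mem_filter, Fintype.mem_piFinset, mem_univ, true_and] at ha ⊢
    obtain ⟨hmem, h1, h2⟩ := ha
    refine ⟨fun i => ?_, ?_⟩
    · rw [ZMod.isUnit_iff_coprime]
      exact Nat.coprime_prod_left_iff.mp h1 i (mem_univ i)
    · rw [← Nat.cast_sum, ZMod.isUnit_iff_coprime]; exact h2
  · intro a ha b hb hab
    simp only [mem_filter, Fintype.mem_piFinset] at ha hb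
    funext i
    exact icc_cast_inj (ha.1 i) (hb.1 i) (congrFun hab i)
  · intro b hb
    simp only [mem_filter, mem_univ, true_and] at hb
    choose x hx1 hx2 using fun i => icc_cast_surj hn (b i)
    have hcop : ∀ i, Nat.Coprime (x i) n := by
      intro i
      rw [← ZMod.isUnit_iff_coprime, hx2 i]
      exact hb.1 i
    refine ⟨x, ?_, funext fun i => hx2 i⟩
    simp only [mem_filter, Fintype.mem_piFinset]
    refine ⟨hx1, Nat.coprime_prod_left_iff.mpr fun i _ => hcop i, ?_⟩
    show Nat.Coprime _ n
    rw [← ZMod.isUnit_iff_coprime, Nat.cast_sum]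
    simpa only [hx2] using hb.2

theorem prodIsUnit_iff {A B : Type*} [Monoid A] [Monoid B] (x : A × B) :
    IsUnit x ↔ IsUnit x.1 ∧ IsUnit x.2 := by
  constructor
  · intro h
    exact ⟨h.map (MonoidHom.fst A B), h.map (MonoidHom.snd A B)⟩
  · rintro ⟨⟨u, hu⟩, ⟨v, hv⟩⟩
    exact ⟨MulEquiv.prodUnits.symm (u, v), by simp [MulEquiv.prodUnits, hu, hv]⟩

theorem ringEquiv_isUnit_iff {A B : Type*} [Ring A] [Ring B] (e : A ≃+* B) (x : A) :
    IsUnit (e x) ↔ IsUnit x :=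
  ⟨fun h => by simpa using h.map e.symm.toRingHom, fun h => h.map e.toRingHom⟩

theorem tpM_mul (k m n : ℕ) [NeZero m] [NeZero n] (h : Nat.Coprime m n) :
    tpM k (m * n) = tpM k m * tpM k n := by
  haveI : NeZero (m * n) := ⟨Nat.mul_ne_zero (NeZero.ne m) (NeZero.ne n)⟩
  classical
  unfold tpM
  rw [← Finset.card_product, ← Finset.filter_product]
  set e := ZMod.chineseRemainder h with he
  have cond : ∀ a : Fin k → ZMod (m * n),
      (((∀ i, IsUnit (a i)) ∧ IsUnit (∑ i, a i)) ↔
        (((∀ i, IsUnit ((e (a i)).1)) ∧ IsUnit (∑ i, (e (a i)).1)) ∧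
         ((∀ i, IsUnit ((e (a i)).2)) ∧ IsUnit (∑ i, (e (a i)).2)))) := by
    intro a
    have hsum : ∑ i, e (a i) = e (∑ i, a i) := (map_sum e a univ).symm
    have h1 : ∀ i, (IsUnit (a i) ↔ IsUnit ((e (a i)).1) ∧ IsUnit ((e (a i)).2)) := by
      intro i
      rw [← prodIsUnit_iff, ringEquiv_isUnit_iff]
    have h2 : IsUnit (∑ i, a i) ↔ IsUnit ((e (∑ i, a i)).1) ∧ IsUnit ((e (∑ i, a i)).2) := by
      rw [← prodIsUnit_iff, ringEquiv_isUnit_iff]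
    rw [h2, ← hsum, Prod.fst_sum, Prod.snd_sum]
    simp only [h1]
    rw [forall_and]
    tauto
  apply Finset.card_bij
      (fun (a : Fin k → ZMod (m * n)) (_ : a ∈ _) =>
        ((fun i => (e (a i)).1, fun i => (e (a i)).2) : (Fin k → ZMod m) × (Fin k → ZMod n)))
  · intro a ha
    simp only [mem_filter, mem_univ, true_and, mem_product] at ha ⊢
    exact (cond a).mp ha
  · intro a _ b _ hab
    funext i
    apply e.injective
    have h1 := congrFun (congrArg Prod.fst hab) i
    have h2 := congrFun (congrArg Prod.snd hab) i
    exact Prod.ext h1 h2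
  · intro b hb
    refine ⟨fun i => e.symm (b.1 i, b.2 i), ?_, ?_⟩
    · simp only [mem_filter, mem_univ, true_and, mem_product] at hb ⊢
      rw [cond]
      simpa using hb
    · simp

theorem zmod_fiber_card (m n : ℕ) [NeZero m] [NeZero n] (h : m ∣ n) (c : ZMod m) :
    (Finset.univ.filter fun x : ZMod n => ZMod.castHom h (ZMod m) x = c).card = n / m := by
  classical
  set f := ZMod.castHom h (ZMod m) with hf
  have hsurj : ∀ c : ZMod m, ∃ x : ZMod n, f x = c := fun c =>
    ⟨(c.val : ZMod n), by simp [hf, map_natCast, ZMod.natCast_val, ZMod.cast_id]⟩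
  have hcard : ∀ c : ZMod m, (univ.filter fun x : ZMod n => f x = c).card
      = (univ.filter fun x : ZMod n => f x = 0).card := by
    intro c
    obtain ⟨xc, hxc⟩ := hsurj c
    apply Finset.card_bij (fun x _ => x - xc)
    · intro x hx
      simp only [mem_filter, mem_univ, true_and] at *
      rw [map_sub, hx, hxc, sub_self]
    · intro a _ b _ hab
      simpa using congrArg (· + xc) hab
    · intro b hb
      simp only [mem_filter, mem_univ, true_and] at *
      exact ⟨b + xc, by rw [map_add, hb, hxc, zero_add], by ring⟩
  have htot := Finset.card_eq_sum_card_fiberwise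
      (f := fun x : ZMod n => f x) (s := univ) (t := univ) (fun x _ => mem_univ _)
  rw [Finset.card_univ, ZMod.card] at htot
  have hn : n = m * (univ.filter fun x : ZMod n => f x = 0).card := by
    refine htot.trans ?_
    simp only [hcard]
    rw [Finset.sum_const, Finset.card_univ, ZMod.card, smul_eq_mul]
  rw [hcard c]
  exact (Nat.div_eq_of_eq_mul_left (Nat.pos_of_ne_zero (NeZero.ne m))
    (hn.trans (mul_comm _ _))).symm

theorem zmod_pow_isUnit_iff {p : ℕ} (hp : p.Prime) (e : ℕ) (x : ZMod (p ^ (e + 1))) :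
    IsUnit (ZMod.castHom (dvd_pow_self p (Nat.succ_ne_zero e)) (ZMod p) x) ↔ IsUnit x := by
  haveI : NeZero p := ⟨hp.pos.ne'⟩
  haveI : NeZero (p ^ (e + 1)) := ⟨pow_ne_zero _ hp.pos.ne'⟩
  have hx : ((x.val : ℕ) : ZMod (p ^ (e + 1))) = x := by
    simp [ZMod.natCast_val, ZMod.cast_id]
  have hcast : ZMod.castHom (dvd_pow_self p (Nat.succ_ne_zero e)) (ZMod p) x
      = ((x.val : ℕ) : ZMod p) := by
    rw [ZMod.castHom_apply, ← ZMod.natCast_val]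
  rw [hcast, ZMod.isUnit_iff_coprime]
  conv_rhs => rw [← hx]
  rw [ZMod.isUnit_iff_coprime, Nat.coprime_pow_right_iff (Nat.succ_pos e)]

theorem tpM_pow (k e p : ℕ) (hp : p.Prime) [NeZero p] [NeZero (p ^ (e + 1))] :
    tpM k (p ^ (e + 1)) = (p ^ e) ^ k * tpM k p := by
  classical
  unfold tpM
  set f := ZMod.castHom (dvd_pow_self p (Nat.succ_ne_zero e)) (ZMod p) with hf
  set F : (Fin k → ZMod (p ^ (e + 1))) → (Fin k → ZMod p) := fun a i => f (a i) with hF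
  set s := (univ.filter fun a : Fin k → ZMod (p ^ (e + 1)) =>
    (∀ i, IsUnit (a i)) ∧ IsUnit (∑ i, a i)) with hs
  set t := (univ.filter fun b : Fin k → ZMod p =>
    (∀ i, IsUnit (b i)) ∧ IsUnit (∑ i, b i)) with ht
  have hFsum : ∀ a : Fin k → ZMod (p ^ (e + 1)), (∑ i, F a i) = f (∑ i, a i) := by
    intro a
    rw [hF]
    exact (map_sum f a univ).symm
  have hmaps : ∀ a ∈ s, F a ∈ t := by
    intro a ha
    simp only [hs, ht, mem_filter, mem_univ, true_and] at *
    refine ⟨fun i => (zmod_pow_isUnit_iff hp e (a i)).mpr (ha.1 i), ?_⟩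
    rw [hFsum a]
    exact (zmod_pow_isUnit_iff hp e _).mpr ha.2
  have key := Finset.card_eq_sum_card_fiberwise hmaps
  have fib : ∀ b ∈ t, (s.filter fun a => F a = b).card = (p ^ e) ^ k := by
    intro b hb
    simp only [ht, mem_filter, mem_univ, true_and] at hb
    have hsf : s.filter (fun a => F a = b) = univ.filter (fun a => F a = b) := by
      ext a
      simp only [hs, Finset.filter_filter, mem_filter, mem_univ, true_and]
      constructor
      · tauto
      · intro hFb
        refine ⟨⟨fun i => ?_, ?_⟩, hFb⟩
        · exact (zmod_pow_isUnit_iff hp e (a i)).mp (by rw [show f (a i) = b i from congrFun hFb i]; exact hb.1 i)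
        · exact (zmod_pow_isUnit_iff hp e _).mp (by rw [← hFsum a, hFb]; exact hb.2)
    have hpi : (univ.filter fun a : Fin k → ZMod (p ^ (e + 1)) => F a = b)
        = Fintype.piFinset (fun i => univ.filter fun x => f x = b i) := by
      ext a
      simp only [hF, mem_filter, mem_univ, true_and, Fintype.mem_piFinset, funext_iff]
    rw [hsf, hpi, Fintype.card_piFinset]
    have hdiv : ∀ i : Fin k, (univ.filter fun x : ZMod (p ^ (e + 1)) => f x = b i).card
        = p ^ e := by
      intro i
      rw [hf, zmod_fiber_card, pow_succ, Nat.mul_div_cancel _ hp.pos]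
    simp [hdiv]
  rw [key, Finset.sum_congr rfl fib, Finset.sum_const, smul_eq_mul, mul_comm]

theorem tpM_zero (p : ℕ) (hp : p.Prime) [NeZero p] : tpM 0 p = 0 := by
  classical
  haveI := Fact.mk hp
  unfold tpM
  rw [Finset.card_eq_zero, Finset.filter_eq_empty_iff]
  intro a _
  simp only [Finset.univ_eq_empty, Finset.sum_empty]
  rintro ⟨-, h⟩
  exact (isUnit_iff_ne_zero.mp h) rfl

theorem tpM_prime_rec (k p : ℕ) (hp : p.Prime) [NeZero p] :
    tpM (k + 1) p + tpM k p = (p - 1) ^ (k + 1) := by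
  classical
  haveI := Fact.mk hp
  -- the set of all-nonzero tuples
  set A := (univ.filter fun a : Fin (k + 1) → ZMod p => ∀ i, a i ≠ 0) with hA
  have hAcard : A.card = (p - 1) ^ (k + 1) := by
    have : A = Fintype.piFinset (fun _ : Fin (k + 1) => univ.filter fun x : ZMod p => x ≠ 0) := by
      ext a
      simp [hA, Fintype.mem_piFinset]
    rw [this, Fintype.card_piFinset]
    have h1 : (univ.filter fun x : ZMod p => x ≠ 0).card = p - 1 := by
      rw [Finset.filter_ne', Finset.card_erase_of_mem (mem_univ _), Finset.card_univ, ZMod.card]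
    simp [h1]
  have h1 : tpM (k + 1) p = (A.filter fun a => ¬ (∑ i, a i) = 0).card := by
    unfold tpM
    rw [hA, Finset.filter_filter]
    congr 1
    ext a
    simp only [isUnit_iff_ne_zero]
  have h2 : tpM k p = (A.filter fun a => (∑ i, a i) = 0).card := by
    unfold tpM
    apply Finset.card_bij (fun (b : Fin k → ZMod p) (hb : b ∈ _) =>
      (Fin.snoc b (-∑ j, b j) : Fin (k + 1) → ZMod p))
    · intro b hb
      simp only [mem_filter, mem_univ, true_and, isUnit_iff_ne_zero] at hb
      simp only [hA, mem_filter, mem_univ, true_and]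
      constructor
      · intro i
        refine Fin.lastCases ?_ ?_ i
        · rw [Fin.snoc_last]
          exact neg_ne_zero.mpr hb.2
        · intro j
          rw [Fin.snoc_castSucc]
          exact hb.1 j
      · rw [Fin.sum_univ_castSucc]
        simp only [Fin.snoc_castSucc, Fin.snoc_last]
        ring
    · intro a _ b _ hab
      funext j
      have := congrFun hab j.castSucc
      simpa only [Fin.snoc_castSucc] using this
    · intro a ha
      simp only [hA, mem_filter, mem_univ, true_and] at ha
      refine ⟨fun j => a j.castSucc, ?_, ?_⟩
      · simp only [mem_filter, mem_univ, true_and, isUnit_iff_ne_zero]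
        refine ⟨fun j => ha.1 j.castSucc, ?_⟩
        have := ha.2
        rw [Fin.sum_univ_castSucc] at this
        have hlast : ∑ j : Fin k, a j.castSucc = -a (Fin.last k) := by
          linear_combination this
        rw [hlast]
        exact neg_ne_zero.mpr (ha.1 (Fin.last k))
      · funext i
        refine Fin.lastCases ?_ ?_ i
        · rw [Fin.snoc_last]
          have := ha.2
          rw [Fin.sum_univ_castSucc] at this
          linear_combination -this
        · intro j
          rw [Fin.snoc_castSucc]
  rw [h1, h2, Nat.add_comm, ← hAcard]
  exact Finset.card_filter_add_card_filter_not _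

theorem geom_closed (q : ℚ) (hq : q ≠ 0) (hq1 : q + 1 ≠ 0) (k : ℕ) :
    (∑ j ∈ Finset.range k, (-1 : ℚ) ^ j / q ^ j) = q * (q ^ k - (-1) ^ k) / ((q + 1) * q ^ k) := by
  induction k with
  | zero => simp
  | succ k ih =>
    rw [Finset.sum_range_succ, ih]
    field_simp
    ring

theorem tpM_prime_rat (k p : ℕ) (hp : p.Prime) [NeZero p] :
    (tpM k p : ℚ) = ((p : ℚ) - 1) ^ k *
      ∑ j ∈ Finset.range k, (-1 : ℚ) ^ j / ((p : ℚ) - 1) ^ j := by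
  have hp2 : (2 : ℚ) ≤ (p : ℚ) := by exact_mod_cast hp.two_le
  set q : ℚ := (p : ℚ) - 1 with hqdef
  have hq : q ≠ 0 := by rw [hqdef]; intro h; nlinarith
  have hq1 : q + 1 ≠ 0 := by rw [hqdef]; intro h; nlinarith
  induction k with
  | zero => rw [tpM_zero p hp]; simp
  | succ k ih =>
    have hrec := tpM_prime_rec k p hp
    have hcast : (tpM (k + 1) p : ℚ) + tpM k p = q ^ (k + 1) := by
      have h2 : ((p - 1 : ℕ) : ℚ) = q := by
        rw [Nat.cast_sub hp.one_le, hqdef]; norm_num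
      rw [← h2]
      exact_mod_cast congrArg (Nat.cast : ℕ → ℚ) hrec
    rw [geom_closed q hq hq1 (k + 1)]
    rw [geom_closed q hq hq1 k] at ih
    have hstep : (tpM (k + 1) p : ℚ) = q ^ (k + 1) - tpM k p := by linarith
    rw [hstep, ih]
    field_simp
    ring

theorem tothPhi_formula_aux (k : ℕ) : ∀ n : ℕ, 0 < n →
    (tothPhi k n : ℚ) = (Nat.totient n : ℚ) ^ k *
      ∏ p ∈ n.primeFactors, ∑ j ∈ Finset.range k, (-1 : ℚ) ^ j / ((p : ℚ) - 1) ^ j := by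
  intro n
  induction n using Nat.recOnPosPrimePosCoprime with
  | prime_pow p m hpp hm =>
    intro _
    have hp' : p.Prime := hpp
    haveI : NeZero p := ⟨hp'.pos.ne'⟩
    obtain ⟨e, rfl⟩ : ∃ e, m = e + 1 := ⟨m - 1, by omega⟩
    haveI : NeZero (p ^ (e + 1)) := ⟨pow_ne_zero _ hp'.pos.ne'⟩
    rw [tothPhi_eq_tpM, tpM_pow k e p hp',
      Nat.totient_prime_pow hp' (Nat.succ_pos e),
      Nat.primeFactors_prime_pow (Nat.succ_ne_zero e) hpp,
      Finset.prod_singleton]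
    push_cast
    rw [tpM_prime_rat k p hp']
    rw [Nat.cast_sub hp'.one_le]
    push_cast
    try simp only [Nat.add_sub_cancel]
    rw [mul_pow]
    ring
  | zero => intro h; exact absurd h (lt_irrefl 0)
  | one =>
    intro _
    have hl : tothPhi k 1 = 1 := by
      unfold tothPhi
      rw [Finset.filter_true_of_mem, Fintype.card_piFinset]
      · simp
      · intro a _
        exact ⟨Nat.gcd_one_right _, Nat.gcd_one_right _⟩
    rw [hl]
    simp
  | coprime a b ha hb hab iha ihb =>
    intro _
    have ha0 : 0 < a := by omega
    have hb0 : 0 < b := by omega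
    haveI : NeZero a := ⟨ha0.ne'⟩
    haveI : NeZero b := ⟨hb0.ne'⟩
    haveI : NeZero (a * b) := ⟨Nat.mul_ne_zero ha0.ne' hb0.ne'⟩
    rw [tothPhi_eq_tpM, tpM_mul k a b hab, ← tothPhi_eq_tpM, ← tothPhi_eq_tpM,
      Nat.totient_mul hab, Nat.Coprime.primeFactors_mul hab,
      Finset.prod_union (Nat.Coprime.disjoint_primeFactors hab)]
    push_cast
    rw [iha ha0, ihb hb0]
    ring

/-- `φ_k(n) = φ(n)^k · ∏_{p ∣ n} (1 − 1/(p−1) + ⋯ + (−1)^{k−1}/(p−1)^{k−1})`. -/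
theorem tothPhi_formula (k n : ℕ) (hk : 0 < k) (hn : 0 < n) :
    (tothPhi k n : ℚ) = (Nat.totient n : ℚ) ^ k *
      ∏ p ∈ n.primeFactors, ∑ j ∈ Finset.range k, (-1 : ℚ) ^ j / ((p : ℚ) - 1) ^ j :=
  tothPhi_formula_aux k n hn
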